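/- Let 3 ≤ j = k−1. For each s ∈ [r] let B_s be an (n−r; j−1, s)-configuration, all on a common vertex set disjoint from R = {v_1,…,v_r}. Then the j-configuration A := ⋃_{s∈[r]} (B_s)_{v_s} is contagious with infection threshold r in K_n^k (n large enough). Consequently ℓ_n(k, k−1, r) ≤ Σ_{i=1}^{r} ℓ_n(k−1, k−2, i). -/

import Mathlib

open Finset

open Classical in
noncomputable def bootStep (V : Finset ℕ) (E : Finset (Finset ℕ)) (j r : ℕ)
    (A : Finset (Finset ℕ)) : Finset (Finset ℕ) :=
  A ∪ (V.powersetCard j).filter (fun J =>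
    ∃ K : Fin r → Finset ℕ, ∃ Js : Fin r → Finset ℕ,
      Function.Injective K ∧ Function.Injective Js ∧
      ∀ i : Fin r, K i ∈ E ∧ Js i ∈ A ∧ Js i ∪ J ⊆ K i)

/-- The infected sets at time `t` of the bootstrap percolation process on a hypergraph
with vertex set `V`, edge set `E`, evolving on `j`-sets with infection threshold `r`. -/
noncomputable def bootProc (V : Finset ℕ) (E : Finset (Finset ℕ)) (j r : ℕ)
    (A0 : Finset (Finset ℕ)) (t : ℕ) : Finset (Finset ℕ) :=
  (bootStep V E j r)^[t] A0

/-- The process on the complete `k`-uniform hypergraph on `V`. -/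
noncomputable def compProc (V : Finset ℕ) (k j r : ℕ)
    (A0 : Finset (Finset ℕ)) (t : ℕ) : Finset (Finset ℕ) :=
  bootProc V (V.powersetCard k) j r A0 t

/-- `A0` is contagious: eventually all `j`-sets of `V` are infected. -/
def Percolates (V : Finset ℕ) (k j r : ℕ) (A0 : Finset (Finset ℕ)) : Prop :=
  ∃ t, compProc V k j r A0 t = V.powersetCard j

/-- `ℓ_n(k,j,r)`: minimum size of a contagious `j`-configuration in `K_n^k`. -/
noncomputable def ellMin (n k j r : ℕ) : ℕ :=
  sInf {m | ∃ A0 : Finset (Finset ℕ), A0 ⊆ (range n).powersetCard j ∧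
    A0.card = m ∧ Percolates (range n) k j r A0}

open Classical in
/-- The extension set of a `(k-1)`-set `J` with respect to configuration `C` in the
complete `k`-uniform hypergraph on `V`. -/
noncomputable def extSet (V : Finset ℕ) (k : ℕ) (C : Finset (Finset ℕ))
    (J : Finset ℕ) : Finset ℕ :=
  V.filter (fun v => ∃ J' ∈ C, J' ≠ J ∧ J' ⊆ insert v J ∧ insert v J ∈ V.powersetCard k)

open Finset

section Helpers

variable {V V' : Finset ℕ} {E E' : Finset (Finset ℕ)} {j r : ℕ} {A A' A0 A0' : Finset (Finset ℕ)}

lemma bootStep_mono (hV : V ⊆ V') (hE : E ⊆ E') (hA : A ⊆ A') :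
    bootStep V E j r A ⊆ bootStep V' E' j r A' := by
  classical
  intro J hJ
  rcases Finset.mem_union.1 hJ with h | h
  · exact Finset.mem_union_left _ (hA h)
  · refine Finset.mem_union_right _ ?_
    rw [Finset.mem_filter] at h ⊢
    obtain ⟨h1, K, Js, hK, hJs, hall⟩ := h
    exact ⟨Finset.powersetCard_mono hV h1, K, Js, hK, hJs, fun i =>
      ⟨hE (hall i).1, hA (hall i).2.1, (hall i).2.2⟩⟩

lemma subset_bootStep : A ⊆ bootStep V E j r A := Finset.subset_union_left

lemma bootProc_succ (t : ℕ) :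
    bootProc V E j r A0 (t + 1) = bootStep V E j r (bootProc V E j r A0 t) :=
  Function.iterate_succ_apply' _ _ _

lemma bootProc_mono_t {t1 t2 : ℕ} (h : t1 ≤ t2) :
    bootProc V E j r A0 t1 ⊆ bootProc V E j r A0 t2 := by
  obtain ⟨d, rfl⟩ := Nat.exists_eq_add_of_le h
  induction d with
  | zero => exact subset_rfl
  | succ d IH =>
      rw [show t1 + (d+1) = (t1 + d) + 1 by omega, bootProc_succ]
      exact (IH (by omega)).trans subset_bootStep

lemma bootProc_mono (hV : V ⊆ V') (hE : E ⊆ E') (hA : A0 ⊆ A0') (t : ℕ) :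
    bootProc V E j r A0 t ⊆ bootProc V' E' j r A0' t := by
  induction t with
  | zero => exact hA
  | succ t IH => rw [bootProc_succ, bootProc_succ]; exact bootStep_mono hV hE IH

lemma bootProc_subset_pc (hA0 : A0 ⊆ V.powersetCard j) (t : ℕ) :
    bootProc V E j r A0 t ⊆ V.powersetCard j := by
  classical
  induction t with
  | zero => exact hA0
  | succ t IH =>
      rw [bootProc_succ]
      exact Finset.union_subset IH (Finset.filter_subset _ _)

lemma inf_of_witness {J : Finset ℕ} (hJ : J ∈ V.powersetCard j)
    (K Js : Fin r → Finset ℕ) (hK : Function.Injective K) (hJs : Function.Injective Js)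
    (hall : ∀ i, K i ∈ E ∧ (∃ t, Js i ∈ bootProc V E j r A0 t) ∧ Js i ∪ J ⊆ K i) :
    ∃ t, J ∈ bootProc V E j r A0 t := by
  classical
  choose t ht using fun i => (hall i).2.1
  refine ⟨(Finset.univ.sup t) + 1, ?_⟩
  rw [bootProc_succ]
  exact Finset.mem_union_right _ (Finset.mem_filter.2 ⟨hJ, K, Js, hK, hJs, fun i =>
    ⟨(hall i).1, bootProc_mono_t (Finset.le_sup (Finset.mem_univ i)) (ht i), (hall i).2.2⟩⟩)

lemma percolates_of_forall {V : Finset ℕ} {k j r : ℕ} {A0 : Finset (Finset ℕ)}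
    (hA0 : A0 ⊆ V.powersetCard j)
    (h : ∀ J ∈ V.powersetCard j, ∃ t, J ∈ compProc V k j r A0 t) :
    Percolates V k j r A0 := by
  classical
  refine ⟨(V.powersetCard j).sup (fun J =>
    if hh : ∃ t, J ∈ compProc V k j r A0 t then hh.choose else 0), ?_⟩
  refine Finset.Subset.antisymm (bootProc_subset_pc hA0 _) ?_
  intro J hJ
  have hh := h J hJ
  have h2 := hh.choose_spec
  refine bootProc_mono_t ?_ h2
  exact le_trans (le_of_eq (dif_pos hh).symm) (Finset.le_sup (f := fun J =>
    if hh : ∃ t, J ∈ compProc V k j r A0 t then hh.choose else 0) hJ)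

end Helpers
lemma ML (k r n : ℕ) (hk : 4 ≤ k) (hr : 1 ≤ r) (hn : 2*r + 2*k ≤ n)
    (v : Fin r → ℕ) (hv : Function.Injective v) (hvn : ∀ i, v i ∈ range n)
    (B : Fin r → Finset (Finset ℕ))
    (hB : ∀ i, B i ⊆ (range n \ Finset.image v Finset.univ).powersetCard (k - 2))
    (hBp : ∀ i, Percolates (range n \ Finset.image v Finset.univ) (k - 1) (k - 2)
      (i.val + 1) (B i)) :
    Percolates (range n) k (k - 1) r
      (Finset.univ.biUnion (fun i => (B i).image (insert (v i)))) := by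
  classical
  set W : Finset ℕ := range n \ Finset.image v Finset.univ with hW
  set A0 : Finset (Finset ℕ) := Finset.univ.biUnion (fun i => (B i).image (insert (v i)))
    with hA0
  set EE : Finset (Finset ℕ) := (range n).powersetCard k with hEE
  have hWsub : W ⊆ range n := Finset.sdiff_subset
  have hvW : ∀ i : Fin r, v i ∉ W := by
    intro i hmem
    rw [hW, Finset.mem_sdiff] at hmem
    exact hmem.2 (Finset.mem_image_of_mem v (Finset.mem_univ i))
  have hA0pc : A0 ⊆ (range n).powersetCard (k-1) := by
    intro J hJ
    obtain ⟨i, -, hJ⟩ := Finset.mem_biUnion.1 hJ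
    obtain ⟨b, hb, rfl⟩ := Finset.mem_image.1 hJ
    obtain ⟨hbW, hbcard⟩ := Finset.mem_powersetCard.1 (hB i hb)
    have hvib : v i ∉ b := fun h => hvW i (hbW h)
    exact Finset.mem_powersetCard.2 ⟨Finset.insert_subset (hvn i) (hbW.trans hWsub),
      by rw [Finset.card_insert_of_notMem hvib, hbcard]; omega⟩
  -- Simulation lemma: stage i infects `insert (v i) J'` for every small-process-infected J'
  have sim : ∀ i : Fin r,
      (∀ i' : Fin r, i < i' → ∀ J'' ∈ W.powersetCard (k-2),
        ∃ t, insert (v i') J'' ∈ bootProc (range n) EE (k-1) r A0 t) →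
      ∀ t0, ∀ J' ∈ bootProc W (W.powersetCard (k-1)) (k-2) (i.val+1) (B i) t0,
        ∃ t, insert (v i) J' ∈ bootProc (range n) EE (k-1) r A0 t := by
    intro i hup t0
    induction t0 with
    | zero =>
        intro J' hJ'
        exact ⟨0, Finset.mem_biUnion.2 ⟨i, Finset.mem_univ i, Finset.mem_image_of_mem _ hJ'⟩⟩
    | succ t0 IH =>
        intro J' hJ'
        rw [bootProc_succ] at hJ'
        rcases Finset.mem_union.1 hJ' with h | h
        · exact IH J' h
        rw [Finset.mem_filter] at h
        obtain ⟨hJ'pc, K', Js', hK', hJs', hall'⟩ := h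
        obtain ⟨hJ'W, hJ'card⟩ := Finset.mem_powersetCard.1 hJ'pc
        have hproc := bootProc_subset_pc (V := W) (E := W.powersetCard (k-1))
          (r := i.val+1) (hB i) t0
        have hvJ' : v i ∉ J' := fun h => hvW i (hJ'W h)
        have hJpc : insert (v i) J' ∈ (range n).powersetCard (k-1) :=
          Finset.mem_powersetCard.2 ⟨Finset.insert_subset (hvn i) (hJ'W.trans hWsub),
            by rw [Finset.card_insert_of_notMem hvJ', hJ'card]; omega⟩
        have hK'w : ∀ l, K' l ⊆ W ∧ (K' l).card = k - 1 :=
          fun l => Finset.mem_powersetCard.1 (hall' l).1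
        have hJs'w : ∀ l, Js' l ⊆ W ∧ (Js' l).card = k - 2 :=
          fun l => Finset.mem_powersetCard.1 (hproc (hall' l).2.1)
        refine inf_of_witness hJpc
          (fun l : Fin r => if h : l.val < i.val + 1 then insert (v i) (K' ⟨l.val, h⟩)
                    else insert (v l) (insert (v i) J'))
          (fun l : Fin r => if h : l.val < i.val + 1 then insert (v i) (Js' ⟨l.val, h⟩)
                    else insert (v l) J') ?_ ?_ ?_
        · -- injectivity of K
          intro a b hab
          replace hab : (if h : a.val < i.val + 1 then insert (v i) (K' ⟨a.val, h⟩)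
              else insert (v a) (insert (v i) J'))
            = (if h : b.val < i.val + 1 then insert (v i) (K' ⟨b.val, h⟩)
              else insert (v b) (insert (v i) J')) := hab
          by_cases ha : a.val < i.val + 1 <;> by_cases hb : b.val < i.val + 1
          · rw [dif_pos ha, dif_pos hb] at hab
            have h1 : v i ∉ K' ⟨a.val, ha⟩ := fun h => hvW i ((hK'w _).1 h)
            have h2 : v i ∉ K' ⟨b.val, hb⟩ := fun h => hvW i ((hK'w _).1 h)
            have := hK' (by
              rw [← Finset.erase_insert h1, ← Finset.erase_insert h2, hab] :
              K' ⟨a.val, ha⟩ = K' ⟨b.val, hb⟩)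
            injection this with hval
            exact Fin.ext hval
          · rw [dif_pos ha, dif_neg hb] at hab
            exfalso
            have : v b ∈ insert (v i) (K' ⟨a.val, ha⟩) := hab ▸ Finset.mem_insert_self _ _
            rcases Finset.mem_insert.1 this with h | h
            · have := hv h; omega
            · exact hvW b ((hK'w _).1 h)
          · rw [dif_neg ha, dif_pos hb] at hab
            exfalso
            have : v a ∈ insert (v i) (K' ⟨b.val, hb⟩) := hab ▸ Finset.mem_insert_self _ _
            rcases Finset.mem_insert.1 this with h | h
            · have := hv h; omega
            · exact hvW a ((hK'w _).1 h)
          · rw [dif_neg ha, dif_neg hb] at hab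
            have : v a ∈ insert (v b) (insert (v i) J') := hab ▸ Finset.mem_insert_self _ _
            rcases Finset.mem_insert.1 this with h | h
            · exact hv h
            · rcases Finset.mem_insert.1 h with h | h
              · have := hv h; omega
              · exact absurd h (fun hh => hvW a (hJ'W hh))
        · -- injectivity of Js
          intro a b hab
          replace hab : (if h : a.val < i.val + 1 then insert (v i) (Js' ⟨a.val, h⟩)
              else insert (v a) J')
            = (if h : b.val < i.val + 1 then insert (v i) (Js' ⟨b.val, h⟩)
              else insert (v b) J') := hab
          by_cases ha : a.val < i.val + 1 <;> by_cases hb : b.val < i.val + 1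
          · rw [dif_pos ha, dif_pos hb] at hab
            have h1 : v i ∉ Js' ⟨a.val, ha⟩ := fun h => hvW i ((hJs'w _).1 h)
            have h2 : v i ∉ Js' ⟨b.val, hb⟩ := fun h => hvW i ((hJs'w _).1 h)
            have := hJs' (by
              rw [← Finset.erase_insert h1, ← Finset.erase_insert h2, hab] :
              Js' ⟨a.val, ha⟩ = Js' ⟨b.val, hb⟩)
            injection this with hval
            exact Fin.ext hval
          · rw [dif_pos ha, dif_neg hb] at hab
            exfalso
            have : v b ∈ insert (v i) (Js' ⟨a.val, ha⟩) := hab ▸ Finset.mem_insert_self _ _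
            rcases Finset.mem_insert.1 this with h | h
            · have := hv h; omega
            · exact hvW b ((hJs'w _).1 h)
          · rw [dif_neg ha, dif_pos hb] at hab
            exfalso
            have : v a ∈ insert (v i) (Js' ⟨b.val, hb⟩) := hab ▸ Finset.mem_insert_self _ _
            rcases Finset.mem_insert.1 this with h | h
            · have := hv h; omega
            · exact hvW a ((hJs'w _).1 h)
          · rw [dif_neg ha, dif_neg hb] at hab
            have : v a ∈ insert (v b) J' := hab ▸ Finset.mem_insert_self _ _
            rcases Finset.mem_insert.1 this with h | h
            · exact hv h
            · exact absurd h (fun hh => hvW a (hJ'W hh))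
        · -- the three conditions
          intro l
          by_cases hl : l.val < i.val + 1
          · simp only [dif_pos hl]
            refine ⟨?_, ?_, ?_⟩
            · refine Finset.mem_powersetCard.2 ⟨Finset.insert_subset (hvn i)
                ((hK'w ⟨l.val, hl⟩).1.trans hWsub), ?_⟩
              rw [Finset.card_insert_of_notMem (fun h => hvW i ((hK'w ⟨l.val, hl⟩).1 h)),
                (hK'w ⟨l.val, hl⟩).2]
              omega
            · exact IH (Js' ⟨l.val, hl⟩) (hall' ⟨l.val, hl⟩).2.1
            · have hsub := (hall' ⟨l.val, hl⟩).2.2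
              rw [Finset.insert_union, Finset.union_insert, Finset.insert_idem]
              exact Finset.insert_subset_insert _ hsub
          · simp only [dif_neg hl]
            have hvl_ne : v l ≠ v i := fun h => by have := hv h; omega
            have hvlJ' : v l ∉ J' := fun h => hvW l (hJ'W h)
            have hvlJ : v l ∉ insert (v i) J' := by
              simp only [Finset.mem_insert]
              push_neg
              exact ⟨hvl_ne, hvlJ'⟩
            refine ⟨?_, ?_, ?_⟩
            · refine Finset.mem_powersetCard.2 ⟨Finset.insert_subset (hvn l)
                (Finset.insert_subset (hvn i) (hJ'W.trans hWsub)), ?_⟩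
              rw [Finset.card_insert_of_notMem hvlJ, Finset.card_insert_of_notMem hvJ',
                hJ'card]
              omega
            · exact hup l (Fin.lt_def.2 (by omega)) J'
                (Finset.mem_powersetCard.2 ⟨hJ'W, hJ'card⟩)
            · rw [Finset.insert_union, Finset.union_insert, Finset.union_self]
  -- stages, downward induction on threshold
  have stage : ∀ (i : Fin r), ∀ J'' ∈ W.powersetCard (k-2),
      ∃ t, insert (v i) J'' ∈ bootProc (range n) EE (k-1) r A0 t := by
    have key : ∀ d : ℕ, ∀ i : Fin r, r - 1 - i.val ≤ d → ∀ J'' ∈ W.powersetCard (k-2),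
        ∃ t, insert (v i) J'' ∈ bootProc (range n) EE (k-1) r A0 t := by
      intro d
      induction d with
      | zero =>
          intro i hd J'' hJ''
          obtain ⟨t0, ht0⟩ := hBp i
          have hmem : J'' ∈ bootProc W (W.powersetCard (k-1)) (k-2) (i.val+1) (B i) t0 := by
            rw [show bootProc W (W.powersetCard (k-1)) (k-2) (i.val+1) (B i) t0
                 = compProc W (k-1) (k-2) (i.val+1) (B i) t0 from rfl]
            rw [ht0]; exact hJ''
          refine sim i ?_ t0 J'' hmem
          intro i' hii' J3 hJ3
          exfalso
          have h1 := i'.isLt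
          have h2 := Fin.lt_def.1 hii'
          omega
      | succ d IHd =>
          intro i hd J'' hJ''
          obtain ⟨t0, ht0⟩ := hBp i
          have hmem : J'' ∈ bootProc W (W.powersetCard (k-1)) (k-2) (i.val+1) (B i) t0 := by
            rw [show bootProc W (W.powersetCard (k-1)) (k-2) (i.val+1) (B i) t0
                 = compProc W (k-1) (k-2) (i.val+1) (B i) t0 from rfl]
            rw [ht0]; exact hJ''
          refine sim i ?_ t0 J'' hmem
          intro i' hii' J3 hJ3
          refine IHd i' ?_ J3 hJ3
          have h1 := i'.isLt
          have h2 := Fin.lt_def.1 hii'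
          omega
    exact fun i => key (r - 1 - i.val) i le_rfl
  have Rcard : (Finset.image v Finset.univ).card = r := by
    rw [Finset.card_image_of_injective _ hv, Finset.card_univ, Fintype.card_fin]
  have hRsub : Finset.image v Finset.univ ⊆ range n := by
    intro x hx
    obtain ⟨i, -, rfl⟩ := Finset.mem_image.1 hx
    exact hvn i
  have hWcard : W.card = n - r := by
    rw [hW, Finset.card_sdiff_of_subset hRsub, Finset.card_range, Rcard]
  -- final: induction on the number of special vertices in J
  have final : ∀ m : ℕ, ∀ J ∈ (range n).powersetCard (k-1),
      (J ∩ (Finset.image v Finset.univ)).card = m →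
      ∃ t, J ∈ bootProc (range n) EE (k-1) r A0 t := by
    intro m
    induction m using Nat.strong_induction_on with
    | _ m IHm =>
    intro J hJ hm
    obtain ⟨hJsub, hJcard⟩ := Finset.mem_powersetCard.1 hJ
    rcases Nat.lt_or_ge m 1 with hm1 | hm1
    · -- m = 0 : J ⊆ W
      have hJR : J ∩ Finset.image v Finset.univ = ∅ := Finset.card_eq_zero.1 (by omega)
      have hJW : J ⊆ W := by
        intro x hx
        rw [hW, Finset.mem_sdiff]
        refine ⟨hJsub hx, fun hxR => ?_⟩
        have hxm : x ∈ J ∩ Finset.image v Finset.univ := Finset.mem_inter.2 ⟨hx, hxR⟩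
        rw [hJR] at hxm
        exact absurd hxm (Finset.notMem_empty x)
      obtain ⟨x, hx⟩ := Finset.card_pos.1 (show 0 < J.card by omega)
      have herase : J.erase x ∈ W.powersetCard (k-2) :=
        Finset.mem_powersetCard.2 ⟨(Finset.erase_subset _ _).trans hJW,
          by rw [Finset.card_erase_of_mem hx, hJcard]; omega⟩
      refine inf_of_witness hJ (fun l => insert (v l) J)
        (fun l => insert (v l) (J.erase x)) ?_ ?_ ?_
      · intro a b hab
        replace hab : insert (v a) J = insert (v b) J := hab
        have hva : v a ∉ J := fun h => hvW a (hJW h)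
        have hmem : v a ∈ insert (v b) J := hab ▸ Finset.mem_insert_self _ _
        rcases Finset.mem_insert.1 hmem with h | h
        · exact hv h
        · exact absurd h hva
      · intro a b hab
        replace hab : insert (v a) (J.erase x) = insert (v b) (J.erase x) := hab
        have hva : v a ∉ J.erase x := fun h => hvW a (hJW (Finset.erase_subset _ _ h))
        have hmem : v a ∈ insert (v b) (J.erase x) := hab ▸ Finset.mem_insert_self _ _
        rcases Finset.mem_insert.1 hmem with h | h
        · exact hv h
        · exact absurd h hva
      · intro l
        have hvlJ : v l ∉ J := fun h => hvW l (hJW h)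
        refine ⟨Finset.mem_powersetCard.2 ⟨Finset.insert_subset (hvn l) hJsub,
            by rw [Finset.card_insert_of_notMem hvlJ, hJcard]; omega⟩,
          stage l _ herase, ?_⟩
        intro y hy
        rcases Finset.mem_union.1 hy with hy | hy
        · rcases Finset.mem_insert.1 hy with hy | hy
          · exact hy ▸ Finset.mem_insert_self _ _
          · exact Finset.mem_insert_of_mem (Finset.erase_subset _ _ hy)
        · exact Finset.mem_insert_of_mem hy
    rcases Nat.lt_or_ge m 2 with hm2 | hm2
    · -- m = 1
      have h1 : (J ∩ Finset.image v Finset.univ).card = 1 := by omega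
      obtain ⟨u, hu⟩ := Finset.card_eq_one.1 h1
      have huJ' : u ∈ J ∩ Finset.image v Finset.univ := hu ▸ Finset.mem_singleton_self u
      obtain ⟨huJ, huR⟩ := Finset.mem_inter.1 huJ'
      obtain ⟨i, -, hi⟩ := Finset.mem_image.1 huR
      subst hi
      have herase : J.erase (v i) ∈ W.powersetCard (k-2) := by
        refine Finset.mem_powersetCard.2 ⟨?_,
          by rw [Finset.card_erase_of_mem huJ, hJcard]; omega⟩
        intro y hy
        obtain ⟨hyu, hyJ⟩ := Finset.mem_erase.1 hy
        rw [hW, Finset.mem_sdiff]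
        refine ⟨hJsub hyJ, fun hyR => ?_⟩
        have hym : y ∈ J ∩ Finset.image v Finset.univ := Finset.mem_inter.2 ⟨hyJ, hyR⟩
        rw [hu] at hym
        exact hyu (Finset.mem_singleton.1 hym)
      obtain ⟨t, ht⟩ := stage i _ herase
      refine ⟨t, ?_⟩
      rw [← Finset.insert_erase huJ]
      exact ht
    · -- m ≥ 2
      obtain ⟨u, hu⟩ := Finset.card_pos.1 (show 0 < (J ∩ Finset.image v Finset.univ).card
        by omega)
      obtain ⟨huJ, huR⟩ := Finset.mem_inter.1 hu
      have hWJ : r ≤ (W \ J).card := by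
        have hle := Finset.le_card_sdiff J W
        omega
      obtain ⟨T, hTsub, hTcard⟩ := Finset.exists_subset_card_eq hWJ
      set w : Fin r → ℕ := fun l => ((T.orderIsoOfFin hTcard) l : ℕ) with hwdef
      have hwinj : Function.Injective w := fun a b hab =>
        (T.orderIsoOfFin hTcard).injective (Subtype.coe_injective hab)
      have hwT : ∀ l, w l ∈ T := fun l => ((T.orderIsoOfFin hTcard) l).2
      have hwW : ∀ l, w l ∈ W := fun l => (Finset.mem_sdiff.1 (hTsub (hwT l))).1
      have hwJ : ∀ l, w l ∉ J := fun l => (Finset.mem_sdiff.1 (hTsub (hwT l))).2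
      refine inf_of_witness hJ (fun l => insert (w l) J)
        (fun l => insert (w l) (J.erase u)) ?_ ?_ ?_
      · intro a b hab
        replace hab : insert (w a) J = insert (w b) J := hab
        have hmem : w a ∈ insert (w b) J := hab ▸ Finset.mem_insert_self _ _
        rcases Finset.mem_insert.1 hmem with h | h
        · exact hwinj h
        · exact absurd h (hwJ a)
      · intro a b hab
        replace hab : insert (w a) (J.erase u) = insert (w b) (J.erase u) := hab
        have hmem : w a ∈ insert (w b) (J.erase u) := hab ▸ Finset.mem_insert_self _ _
        rcases Finset.mem_insert.1 hmem with h | h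
        · exact hwinj h
        · exact absurd (Finset.erase_subset _ _ h) (hwJ a)
      · intro l
        have hwre : w l ∉ J.erase u := fun h => hwJ l (Finset.erase_subset _ _ h)
        refine ⟨Finset.mem_powersetCard.2 ⟨Finset.insert_subset (hWsub (hwW l)) hJsub,
            by rw [Finset.card_insert_of_notMem (hwJ l), hJcard]; omega⟩, ?_, ?_⟩
        · refine IHm (m-1) (by omega) (insert (w l) (J.erase u)) ?_ ?_
          · refine Finset.mem_powersetCard.2 ⟨Finset.insert_subset (hWsub (hwW l))
              ((Finset.erase_subset _ _).trans hJsub), ?_⟩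
            rw [Finset.card_insert_of_notMem hwre, Finset.card_erase_of_mem huJ, hJcard]
            omega
          · have hwR : w l ∉ Finset.image v Finset.univ := by
              have hmem := hwW l
              rw [hW, Finset.mem_sdiff] at hmem
              exact hmem.2
            have hint : insert (w l) (J.erase u) ∩ Finset.image v Finset.univ
                = (J ∩ Finset.image v Finset.univ).erase u := by
              ext y
              simp only [Finset.mem_inter, Finset.mem_insert, Finset.mem_erase]
              constructor
              · rintro ⟨hy1 | hy1, hy2⟩
                · exact absurd (hy1 ▸ hy2) hwR
                · exact ⟨hy1.1, hy1.2, hy2⟩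
              · rintro ⟨hyu, hyJ, hyR⟩
                exact ⟨Or.inr ⟨hyu, hyJ⟩, hyR⟩
            rw [hint, Finset.card_erase_of_mem hu, hm]
        · intro y hy
          rcases Finset.mem_union.1 hy with hy | hy
          · rcases Finset.mem_insert.1 hy with hy | hy
            · exact hy ▸ Finset.mem_insert_self _ _
            · exact Finset.mem_insert_of_mem (Finset.erase_subset _ _ hy)
          · exact Finset.mem_insert_of_mem hy
  refine percolates_of_forall hA0pc ?_
  intro J hJ
  exact final _ J hJ rfl
lemma UT (j s m : ℕ) (hj : 1 ≤ j) (hm : j + s + 1 ≤ m) (C : Finset (Finset ℕ))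
    (hC : C ⊆ (range m).powersetCard j)
    (hP : Percolates (range m) (j+1) j s C) :
    Percolates (range (m+1)) (j+1) j s C := by
  classical
  have hVsub : range m ⊆ range (m+1) := Finset.range_subset_range.2 (Nat.le_succ m)
  have hEsub : (range m).powersetCard (j+1) ⊆ (range (m+1)).powersetCard (j+1) :=
    Finset.powersetCard_mono hVsub
  have hCsub' : C ⊆ (range (m+1)).powersetCard j :=
    hC.trans (Finset.powersetCard_mono hVsub)
  obtain ⟨t0, ht0⟩ := hP
  have hA : ∀ J ∈ (range m).powersetCard j,
      ∃ t, J ∈ bootProc (range (m+1)) ((range (m+1)).powersetCard (j+1)) j s C t := by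
    intro J hJ
    refine ⟨t0, bootProc_mono hVsub hEsub subset_rfl t0 ?_⟩
    rw [show bootProc (range m) ((range m).powersetCard (j+1)) j s C t0
        = compProc (range m) (j+1) j s C t0 from rfl, ht0]
    exact hJ
  refine percolates_of_forall hCsub' ?_
  intro J hJ
  obtain ⟨hJsub, hJcard⟩ := Finset.mem_powersetCard.1 hJ
  by_cases hmJ : m ∈ J
  · have hJ0sub : J.erase m ⊆ range m := by
      intro y hy
      obtain ⟨hym, hyJ⟩ := Finset.mem_erase.1 hy
      have hlt := Finset.mem_range.1 (hJsub hyJ)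
      exact Finset.mem_range.2 (by omega)
    have hJ0card : (J.erase m).card = j - 1 := by
      rw [Finset.card_erase_of_mem hmJ, hJcard]
    have hsd : s ≤ (range m \ J.erase m).card := by
      have hle := Finset.le_card_sdiff (J.erase m) (range m)
      have hcr := Finset.card_range m
      omega
    obtain ⟨T, hTsub, hTcard⟩ := Finset.exists_subset_card_eq hsd
    set w : Fin s → ℕ := fun l => ((T.orderIsoOfFin hTcard) l : ℕ) with hwdef
    have hwinj : Function.Injective w := fun a b hab =>
      (T.orderIsoOfFin hTcard).injective (Subtype.coe_injective hab)
    have hwmem : ∀ l, w l ∈ range m \ J.erase m := fun l =>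
      hTsub ((T.orderIsoOfFin hTcard) l).2
    have hwm : ∀ l, w l < m := fun l => Finset.mem_range.1 (Finset.mem_sdiff.1 (hwmem l)).1
    have hwJ : ∀ l, w l ∉ J := by
      intro l hl
      have h2 := (Finset.mem_sdiff.1 (hwmem l)).2
      exact h2 (Finset.mem_erase.2 ⟨by have := hwm l; omega, hl⟩)
    refine inf_of_witness hJ (fun l => insert (w l) J) (fun l => insert (w l) (J.erase m))
      ?_ ?_ ?_
    · intro a b hab
      replace hab : insert (w a) J = insert (w b) J := hab
      have hmem : w a ∈ insert (w b) J := hab ▸ Finset.mem_insert_self _ _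
      rcases Finset.mem_insert.1 hmem with h | h
      · exact hwinj h
      · exact absurd h (hwJ a)
    · intro a b hab
      replace hab : insert (w a) (J.erase m) = insert (w b) (J.erase m) := hab
      have hmem : w a ∈ insert (w b) (J.erase m) := hab ▸ Finset.mem_insert_self _ _
      rcases Finset.mem_insert.1 hmem with h | h
      · exact hwinj h
      · exact absurd (Finset.erase_subset _ _ h) (hwJ a)
    · intro l
      have hwre : w l ∉ J.erase m := (Finset.mem_sdiff.1 (hwmem l)).2
      refine ⟨?_, ?_, ?_⟩
      · refine Finset.mem_powersetCard.2 ⟨Finset.insert_subset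
          (Finset.mem_range.2 (by have := hwm l; omega)) hJsub, ?_⟩
        rw [Finset.card_insert_of_notMem (hwJ l), hJcard]
      · refine hA (insert (w l) (J.erase m)) ?_
        refine Finset.mem_powersetCard.2 ⟨Finset.insert_subset
          (Finset.mem_range.2 (hwm l)) hJ0sub, ?_⟩
        rw [Finset.card_insert_of_notMem hwre, hJ0card]
        omega
      · intro y hy
        rcases Finset.mem_union.1 hy with hy | hy
        · rcases Finset.mem_insert.1 hy with hy | hy
          · exact hy ▸ Finset.mem_insert_self _ _
          · exact Finset.mem_insert_of_mem (Finset.erase_subset _ _ hy)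
        · exact Finset.mem_insert_of_mem hy
  · refine hA J (Finset.mem_powersetCard.2 ⟨?_, hJcard⟩)
    intro y hy
    have h1 := Finset.mem_range.1 (hJsub hy)
    have h2 : y ≠ m := fun h => hmJ (h ▸ hy)
    exact Finset.mem_range.2 (by omega)

lemma ell_eventually_const (j s m1 : ℕ) (hj : 1 ≤ j) (hm1 : j + s + 1 ≤ m1) :
    ∃ N, m1 ≤ N ∧ ∀ m, N ≤ m → ellMin m (j+1) j s = ellMin N (j+1) j s := by
  classical
  have hne : ∀ m : ℕ, {x | ∃ A0 : Finset (Finset ℕ), A0 ⊆ (range m).powersetCard j ∧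
      A0.card = x ∧ Percolates (range m) (j+1) j s A0}.Nonempty := by
    intro m
    exact ⟨((range m).powersetCard j).card, (range m).powersetCard j, subset_rfl, rfl, 0, rfl⟩
  have hstep : ∀ m, m1 ≤ m → ellMin (m+1) (j+1) j s ≤ ellMin m (j+1) j s := by
    intro m hm
    have hmem : ∃ A0 : Finset (Finset ℕ), A0 ⊆ (range m).powersetCard j ∧
        A0.card = ellMin m (j+1) j s ∧ Percolates (range m) (j+1) j s A0 :=
      Nat.sInf_mem (hne m)
    obtain ⟨A0, hsub, hcard, hperc⟩ := hmem
    have hperc' := UT j s m hj (by omega) A0 hsub hperc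
    have hle : ellMin (m+1) (j+1) j s ≤ A0.card :=
      Nat.sInf_le ⟨A0, hsub.trans (Finset.powersetCard_mono
        (Finset.range_subset_range.2 (Nat.le_succ m))), rfl, hperc'⟩
    omega
  have hmono : ∀ a b : ℕ, m1 ≤ a → a ≤ b → ellMin b (j+1) j s ≤ ellMin a (j+1) j s := by
    intro a b ha hab
    obtain ⟨d, rfl⟩ := Nat.exists_eq_add_of_le hab
    clear hab
    induction d with
    | zero => exact le_rfl
    | succ d IH => exact (hstep (a+d) (by omega)).trans IH
  have hLmem : ∃ m', m1 ≤ m' ∧ ellMin m' (j+1) j s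
      = sInf {y | ∃ m', m1 ≤ m' ∧ ellMin m' (j+1) j s = y} :=
    Nat.sInf_mem (⟨ellMin m1 (j+1) j s, m1, le_rfl, rfl⟩ :
      {y | ∃ m', m1 ≤ m' ∧ ellMin m' (j+1) j s = y}.Nonempty)
  obtain ⟨N, hN1, hN2⟩ := hLmem
  refine ⟨N, hN1, ?_⟩
  intro m hm
  have h1 : ellMin m (j+1) j s ≤ ellMin N (j+1) j s := hmono N m hN1 hm
  have h2 : sInf {y | ∃ m', m1 ≤ m' ∧ ellMin m' (j+1) j s = y} ≤ ellMin m (j+1) j s :=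
    Nat.sInf_le ⟨m, by omega, rfl⟩
  omega
theorem stmt18 (k r : ℕ) (hk : 4 ≤ k) (hr : 1 ≤ r) :
    ∃ n0, ∀ n ≥ n0,
      (∀ v : Fin r → ℕ, Function.Injective v → (∀ i, v i ∈ range n) →
        ∀ B : Fin r → Finset (Finset ℕ),
        (∀ i, B i ⊆ (range n \ Finset.image v Finset.univ).powersetCard (k - 2)) →
        (∀ i, Percolates (range n \ Finset.image v Finset.univ) (k - 1) (k - 2)
          (i.val + 1) (B i)) →
        Percolates (range n) k (k - 1) r
          (Finset.univ.biUnion (fun i => (B i).image (insert (v i))))) ∧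
      ellMin n k (k - 1) r ≤ ∑ i ∈ Finset.range r, ellMin n (k - 1) (k - 2) (i + 1) := by
  classical
  have hconst : ∀ i : Fin r, ∃ N, (k + r + 2) ≤ N ∧ ∀ m, N ≤ m →
      ellMin m (k-1) (k-2) (i.val+1) = ellMin N (k-1) (k-2) (i.val+1) := by
    intro i
    have hkk : k - 2 + 1 = k - 1 := by omega
    obtain ⟨N, hN1, hN2⟩ := ell_eventually_const (k-2) (i.val+1)
      (max (k + r + 2) ((k-2) + (i.val+1) + 1)) (by omega) (le_max_right _ _)
    refine ⟨N, le_trans (le_max_left _ _) hN1, ?_⟩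
    intro m hm
    have h := hN2 m hm
    rwa [hkk] at h
  choose N hN1 hN2 using hconst
  refine ⟨(Finset.univ.sup N) + 2*r + 2*k + 2, ?_⟩
  intro n hn
  have hnr : 2*r + 2*k ≤ n := by omega
  constructor
  · intro v hv hvn B hB hBp
    exact ML k r n hk hr hnr v hv hvn B hB hBp
  · set vv : Fin r → ℕ := fun i => n - r + i.val with hvv
    have hvvinj : Function.Injective vv := by
      intro a b hab
      have h : n - r + a.val = n - r + b.val := hab
      exact Fin.ext (by omega)
    have hvvn : ∀ i : Fin r, vv i ∈ range n := by
      intro i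
      have hi := i.isLt
      exact Finset.mem_range.2 (by simp only [hvv]; omega)
    have hWeq : range n \ Finset.image vv Finset.univ = range (n - r) := by
      ext x
      simp only [Finset.mem_sdiff, Finset.mem_image, Finset.mem_univ, true_and,
        Finset.mem_range]
      constructor
      · rintro ⟨hx, hno⟩
        by_contra hcon
        exact hno ⟨⟨x - (n - r), by omega⟩, by simp only [hvv]; omega⟩
      · intro hx
        refine ⟨by omega, ?_⟩
        rintro ⟨a, ha⟩
        have h1 := a.isLt
        have h2 : n - r + a.val = x := ha
        omega
    have hopt : ∀ i : Fin r, ∃ A0 : Finset (Finset ℕ),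
        A0 ⊆ (range (n-r)).powersetCard (k-2) ∧
        A0.card = ellMin (n-r) (k-1) (k-2) (i.val+1) ∧
        Percolates (range (n-r)) (k-1) (k-2) (i.val+1) A0 := by
      intro i
      exact Nat.sInf_mem (⟨((range (n-r)).powersetCard (k-2)).card,
        (range (n-r)).powersetCard (k-2), subset_rfl, rfl, 0, rfl⟩ :
        {x | ∃ A0 : Finset (Finset ℕ), A0 ⊆ (range (n-r)).powersetCard (k-2) ∧
          A0.card = x ∧ Percolates (range (n-r)) (k-1) (k-2) (i.val+1) A0}.Nonempty)
    choose C hC1 hC2 hC3 using hopt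
    have hperc := ML k r n hk hr hnr vv hvvinj hvvn C
      (fun i => by rw [hWeq]; exact hC1 i)
      (fun i => by rw [hWeq]; exact hC3 i)
    have hA0pc : (Finset.univ.biUnion (fun i => (C i).image (insert (vv i))))
        ⊆ (range n).powersetCard (k-1) := by
      intro J hJ
      obtain ⟨i, -, hJ⟩ := Finset.mem_biUnion.1 hJ
      obtain ⟨b, hb, rfl⟩ := Finset.mem_image.1 hJ
      obtain ⟨hbW, hbcard⟩ := Finset.mem_powersetCard.1 (hC1 i hb)
      have hvb : vv i ∉ b := by
        intro hmem
        have h1 := Finset.mem_range.1 (hbW hmem)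
        have h2 : vv i = n - r + i.val := rfl
        omega
      refine Finset.mem_powersetCard.2 ⟨Finset.insert_subset (hvvn i)
        (hbW.trans (Finset.range_subset_range.2 (by omega))), ?_⟩
      rw [Finset.card_insert_of_notMem hvb, hbcard]
      omega
    have hle1 : ellMin n k (k-1) r
        ≤ (Finset.univ.biUnion (fun i => (C i).image (insert (vv i)))).card :=
      Nat.sInf_le ⟨_, hA0pc, rfl, hperc⟩
    have hle2 : (Finset.univ.biUnion (fun i => (C i).image (insert (vv i)))).card
        ≤ ∑ i : Fin r, ((C i).image (insert (vv i))).card :=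
      Finset.card_biUnion_le
    have hle3 : ∀ i : Fin r, ((C i).image (insert (vv i))).card
        ≤ ellMin n (k-1) (k-2) (i.val+1) := by
      intro i
      have h4 := Finset.card_image_le (s := C i) (f := insert (vv i))
      have h5 := hC2 i
      have hsup : N i ≤ Finset.univ.sup N := Finset.le_sup (Finset.mem_univ i)
      have h6 : ellMin (n-r) (k-1) (k-2) (i.val+1) = ellMin (N i) (k-1) (k-2) (i.val+1) :=
        hN2 i (n-r) (by omega)
      have h7 : ellMin n (k-1) (k-2) (i.val+1) = ellMin (N i) (k-1) (k-2) (i.val+1) :=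
        hN2 i n (by omega)
      omega
    have hsum : ∑ i : Fin r, ((C i).image (insert (vv i))).card
        ≤ ∑ i : Fin r, ellMin n (k-1) (k-2) (i.val+1) :=
      Finset.sum_le_sum (fun i _ => hle3 i)
    have hconv : ∑ i : Fin r, ellMin n (k-1) (k-2) (i.val+1)
        = ∑ i ∈ Finset.range r, ellMin n (k-1) (k-2) (i+1) :=
      Fin.sum_univ_eq_sum_range (fun i => ellMin n (k-1) (k-2) (i+1)) r
    omega
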